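/- Suppose W_d takes exactly three nonzero values A < 0 < B and C on GF(2^m)^* with C not strictly between A and B. If N_C > 0 denotes the number of a with W_d(a) = C, then 2^{2m} - 2^m(A+B) + (2^m-1)AB > 0, and hence, using |A| < 2^m and B ≥ 1, we get AB > -2^{m+1}. -/

import Mathlib

open Finset

/-- `(-1)^{Tr(y)}` as an integer, where `Tr` is the absolute trace to `GF(2)`. -/
noncomputable def sgn (F : Type*) [Field F] [Fintype F] [Algebra (ZMod 2) F] (y : F) : ℤ :=
  if Algebra.trace (ZMod 2) F y = 0 then 1 else -1

/-- The Walsh transform `W_d(a) = Σ_{x ∈ GF(2^m)} (-1)^{Tr(x^d + a x)}`. -/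
noncomputable def Wd (F : Type*) [Field F] [Fintype F] [Algebra (ZMod 2) F]
    (d : ℕ) (a : F) : ℤ :=
  ∑ x : F, sgn F (x ^ d + a * x)

section Helpers

set_option linter.unusedSectionVars false

variable (F : Type*) [Field F] [Fintype F] [Algebra (ZMod 2) F] [DecidableEq F]

lemma sgn_add (y z : F) : sgn F (y + z) = sgn F y * sgn F z := by
  unfold sgn; rw [map_add]
  set s := Algebra.trace (ZMod 2) F y
  set t := Algebra.trace (ZMod 2) F z
  clear_value s t; revert s t; decide

lemma sgn_zero : sgn F 0 = 1 := by unfold sgn; simp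

lemma exists_trace_one : ∃ c : F, Algebra.trace (ZMod 2) F c = 1 := by
  haveI : FiniteDimensional (ZMod 2) F := Module.Finite.of_finite
  exact Algebra.trace_surjective (ZMod 2) F 1

lemma sum_sgn_eq_zero : ∑ x : F, sgn F x = 0 := by
  obtain ⟨c, hc⟩ := exists_trace_one F
  have h1 : ∑ x : F, sgn F x = ∑ x : F, sgn F (x + c) :=
    (Fintype.sum_equiv (Equiv.addRight c) _ _ (fun x => rfl)).symm
  have h2 : ∀ x : F, sgn F (x + c) = -sgn F x := by
    intro x
    rw [sgn_add]
    have : sgn F c = -1 := by unfold sgn; rw [hc]; simp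
    rw [this]; ring
  simp only [h2, Finset.sum_neg_distrib] at h1
  linarith

lemma sum_sgn_mul' (x : F) :
    ∑ a : F, sgn F (a * x) = if x = 0 then (Fintype.card F : ℤ) else 0 := by
  split_ifs with h
  · subst h; simp [sgn_zero]
  · have h1 : ∑ a : F, sgn F (a * x) = ∑ b : F, sgn F b := by
      apply Fintype.sum_bijective (· * x) (mulRight_bijective₀ x h)
      intro a; rfl
    rw [h1, sum_sgn_eq_zero]

lemma char_two (x : F) : x + x = 0 := by
  have h2 : (1 : F) + 1 = 0 := by
    have : ((1 : ZMod 2) + 1) = 0 := by decide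
    calc (1 : F) + 1 = algebraMap (ZMod 2) F (1 + 1) := by rw [map_add, map_one]
    _ = 0 := by rw [this, map_zero]
  calc x + x = (1 + 1) * x := by ring
  _ = 0 := by rw [h2, zero_mul]

lemma sum_Wd (d : ℕ) (hd : d ≠ 0) : ∑ a : F, Wd F d a = (Fintype.card F : ℤ) := by
  unfold Wd
  rw [Finset.sum_comm]
  have key : ∀ x : F, ∑ a : F, sgn F (x ^ d + a * x)
      = sgn F (x ^ d) * (if x = 0 then (Fintype.card F : ℤ) else 0) := by
    intro x
    simp only [sgn_add]
    rw [← Finset.mul_sum, sum_sgn_mul']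
  rw [Finset.sum_congr rfl (fun x _ => key x)]
  rw [Finset.sum_eq_single 0]
  · rw [if_pos rfl, zero_pow hd, sgn_zero, one_mul]
  · intro x _ hx; rw [if_neg hx, mul_zero]
  · intro h; exact absurd (Finset.mem_univ 0) h

lemma sum_Wd_sq (d : ℕ) : ∑ a : F, (Wd F d a)^2 = (Fintype.card F : ℤ)^2 := by
  have key : ∀ a : F, (Wd F d a)^2
      = ∑ x : F, ∑ y : F, sgn F (x^d + y^d) * sgn F (a*(x+y)) := by
    intro a
    rw [sq]; unfold Wd; rw [Finset.sum_mul_sum]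
    refine Finset.sum_congr rfl fun x _ => Finset.sum_congr rfl fun y _ => ?_
    rw [← sgn_add, ← sgn_add]
    congr 1; ring
  simp only [key]
  rw [Finset.sum_comm]
  have key2 : ∀ x : F, ∑ a : F, ∑ y : F, sgn F (x^d + y^d) * sgn F (a*(x+y))
      = (Fintype.card F : ℤ) := by
    intro x
    rw [Finset.sum_comm]
    have inner : ∀ y : F, ∑ a : F, sgn F (x^d + y^d) * sgn F (a*(x+y))
        = sgn F (x^d + y^d) * (if x + y = 0 then (Fintype.card F : ℤ) else 0) := by
      intro y
      rw [← Finset.mul_sum]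
      congr 1
      have := sum_sgn_mul' F (x + y)
      try simp only [mul_comm] at this ⊢
      rw [show (∑ a : F, sgn F (a * (x+y))) = ∑ a : F, sgn F ((x+y) * a) from
        Finset.sum_congr rfl fun a _ => by rw [mul_comm], ← this]
      exact Finset.sum_congr rfl fun a _ => by rw [mul_comm]
    rw [Finset.sum_congr rfl (fun y _ => inner y)]
    rw [Finset.sum_eq_single x]
    · rw [if_pos (char_two F x), char_two F (x^d), sgn_zero, one_mul]
    · intro y _ hy
      rw [if_neg, mul_zero]
      intro h
      apply hy
      have := char_two F x
      -- x + y = 0 and x + x = 0 imply y = x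
      have : y = x := by linear_combination h - this
      exact this
    · intro h; exact absurd (Finset.mem_univ x) h
  rw [Finset.sum_congr rfl (fun x _ => key2 x), Finset.sum_const, Finset.card_univ,
    nsmul_eq_mul, sq]

lemma pow_bij (d : ℕ) (hd0 : d ≠ 0) (hd : Nat.Coprime d (Fintype.card F - 1)) :
    Function.Bijective (fun x : F => x ^ d) := by
  rw [Fintype.bijective_iff_injective_and_card]
  refine ⟨fun x y hxy => ?_, rfl⟩
  simp only at hxy
  rcases eq_or_ne y 0 with rfl | hy
  · rw [zero_pow hd0] at hxy
    exact pow_eq_zero_iff hd0 |>.mp hxy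
  rcases eq_or_ne x 0 with rfl | hx
  · rw [zero_pow hd0] at hxy
    exact ((pow_eq_zero_iff hd0).mp hxy.symm).symm
  have hcard : Nat.card Fˣ = Fintype.card F - 1 := by
    rw [Nat.card_eq_fintype_card, Fintype.card_units]
  have hco : (Nat.card Fˣ).Coprime d := by rw [hcard]; exact hd.symm
  have := hco.pow_left_bijective.injective (a₁ := Units.mk0 x hx) (a₂ := Units.mk0 y hy)
  have hu : Units.mk0 x hx = Units.mk0 y hy := by
    apply this
    ext
    simpa using hxy
  simpa using congrArg Units.val hu

lemma Wd_zero (d : ℕ) (hd0 : d ≠ 0) (hd : Nat.Coprime d (Fintype.card F - 1)) :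
    Wd F d 0 = 0 := by
  unfold Wd
  simp only [zero_mul, add_zero]
  rw [Fintype.sum_bijective _ (pow_bij F d hd0 hd) _ (fun y => sgn F y) (fun x => rfl)]
  exact sum_sgn_eq_zero F

end Helpers

/-- positivity of the numerator in the N_C formula, and the resulting
lower bound AB > -2^(m+1). -/
theorem stmt_12 {m : ℕ} (hm : 1 ≤ m) (F : Type*) [Field F] [Fintype F] [DecidableEq F]
    [Algebra (ZMod 2) F] (hF : Fintype.card F = 2 ^ m)
    (d : ℕ) (hd : Nat.Coprime d (2 ^ m - 1))
    (hd2 : ¬ ∃ k, d ≡ 2 ^ k [MOD 2 ^ m - 1])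
    (A B C : ℤ) (hAB : A ≠ B) (hAC : A ≠ C) (hBC : B ≠ C)
    (hAneg : A < 0) (hBpos : 0 < B) (hC : C ≠ 0)
    (hCout : ¬ (A < C ∧ C < B))
    (hA' : |A| < 2 ^ m) (hB' : |B| < 2 ^ m) (hC' : |C| < 2 ^ m)
    (himg : (Finset.univ \ {(0 : F)}).image (Wd F d) = {A, B, C}) :
    0 < 2 ^ (2 * m) - 2 ^ m * (A + B) + (2 ^ m - 1) * (A * B) ∧
      A * B > -2 ^ (m + 1) := by
  -- d ≠ 0
  have hd0 : d ≠ 0 := by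
    rintro rfl
    have h1 : 2 ^ m - 1 = 1 := by simpa [Nat.coprime_zero_left] using hd
    exact hd2 ⟨0, by rw [h1]; exact Nat.modEq_one⟩
  set S : Finset F := Finset.univ \ {(0 : F)} with hS
  have hq : (Fintype.card F : ℤ) = 2 ^ m := by rw [hF]; push_cast; ring
  have hq2 : (2 : ℤ) ≤ 2 ^ m := by
    calc (2:ℤ) = 2^1 := (pow_one 2).symm
    _ ≤ 2^m := pow_le_pow_right₀ (by norm_num) hm
  have hcardS : (S.card : ℤ) = 2 ^ m - 1 := by
    rw [hS, Finset.card_sdiff_of_subset (Finset.singleton_subset_iff.mpr (Finset.mem_univ 0)),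
      Finset.card_singleton, Finset.card_univ, hF]
    have : 1 ≤ 2 ^ m := Nat.one_le_two_pow
    push_cast [Nat.cast_sub this]
    ring
  have hW0 : Wd F d 0 = 0 := Wd_zero F d hd0 (by rwa [hF])
  have hsum1 : ∑ a ∈ S, Wd F d a = 2 ^ m := by
    rw [hS, Finset.sum_sdiff_eq_sub (Finset.singleton_subset_iff.mpr (Finset.mem_univ 0)),
      Finset.sum_singleton, hW0, sub_zero, sum_Wd F d hd0, hq]
  have hsum2 : ∑ a ∈ S, (Wd F d a)^2 = (2 ^ m : ℤ)^2 := by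
    rw [hS, Finset.sum_sdiff_eq_sub (Finset.singleton_subset_iff.mpr (Finset.mem_univ 0)),
      Finset.sum_singleton, hW0, sum_Wd_sq F d, hq]
    norm_num
  -- membership
  have hmem : ∀ a ∈ S, Wd F d a = A ∨ Wd F d a = B ∨ Wd F d a = C := by
    intro a ha
    have : Wd F d a ∈ ({A, B, C} : Finset ℤ) := himg ▸ Finset.mem_image_of_mem _ ha
    simpa using this
  -- the C-fiber
  set T : Finset F := S.filter (fun a => Wd F d a = C) with hT
  have hTne : 1 ≤ T.card := by
    have hCmem : C ∈ ({A, B, C} : Finset ℤ) := by simp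
    rw [← himg, Finset.mem_image] at hCmem
    obtain ⟨a, ha, hac⟩ := hCmem
    have : a ∈ T := Finset.mem_filter.mpr ⟨ha, hac⟩
    exact Finset.card_pos.mpr ⟨a, this⟩
  -- key sum identity
  have hkey : ∑ a ∈ S, (Wd F d a - A) * (Wd F d a - B) = (T.card : ℤ) * ((C - A) * (C - B)) := by
    rw [← Finset.sum_filter_add_sum_filter_not S (fun a => Wd F d a = C)]
    have h1 : ∑ a ∈ S.filter (fun a => Wd F d a = C), (Wd F d a - A) * (Wd F d a - B)
        = (T.card : ℤ) * ((C - A) * (C - B)) := by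
      rw [Finset.sum_congr rfl (fun a ha => by
        rw [(Finset.mem_filter.mp ha).2]), Finset.sum_const, nsmul_eq_mul, hT]
    have h2 : ∑ a ∈ S.filter (fun a => ¬ Wd F d a = C), (Wd F d a - A) * (Wd F d a - B) = 0 := by
      apply Finset.sum_eq_zero
      intro a ha
      obtain ⟨haS, hac⟩ := Finset.mem_filter.mp ha
      rcases hmem a haS with h | h | h
      · rw [h, sub_self, zero_mul]
      · rw [h, sub_self, mul_zero]
      · exact absurd h hac
    rw [h1, h2, add_zero]
  -- expanded form
  have hexp : ∑ a ∈ S, (Wd F d a - A) * (Wd F d a - B)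
      = (2^m:ℤ)^2 - (A + B) * 2^m + A * B * (2^m - 1) := by
    have : ∀ a ∈ S, (Wd F d a - A) * (Wd F d a - B)
        = (Wd F d a)^2 - (A + B) * Wd F d a + A * B := fun a _ => by ring
    rw [Finset.sum_congr rfl this, Finset.sum_add_distrib, Finset.sum_sub_distrib,
      ← Finset.mul_sum, Finset.sum_const, nsmul_eq_mul, hsum1, hsum2, hcardS]
    ring
  -- positivity of (C-A)(C-B)
  have hCAB : 0 < (C - A) * (C - B) := by
    have hABlt : A < B := hAneg.trans hBpos
    rcases lt_or_ge A C with h1 | h1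
    · have h2 : B < C := by
        rcases lt_or_ge C B with h3 | h3
        · exact absurd ⟨h1, h3⟩ hCout
        · exact lt_of_le_of_ne h3 hBC
      exact mul_pos (by linarith) (by linarith)
    · have h2 : C < A := lt_of_le_of_ne h1 hAC.symm
      exact mul_pos_of_neg_of_neg (by linarith) (by linarith)
  have hpos : 0 < (2^m:ℤ)^2 - (A + B) * 2^m + A * B * (2^m - 1) := by
    rw [← hexp, hkey]
    have : (1:ℤ) ≤ T.card := by exact_mod_cast hTne
    nlinarith
  constructor
  · have h2m : (2:ℤ)^(2*m) = ((2:ℤ)^m)^2 := by rw [mul_comm, pow_mul]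
    rw [h2m]; linarith
  · have hA1 : -2^m + 1 ≤ A := by
      have := (abs_lt.mp hA').1
      linarith
    have hB1 : (1:ℤ) ≤ B := hBpos
    have h2m1 : (2:ℤ)^(m+1) = 2 * 2^m := by ring
    rw [gt_iff_lt, h2m1]
    nlinarith [mul_le_mul_of_nonneg_left hA1 (by linarith : (0:ℤ) ≤ 2^m),
      mul_le_mul_of_nonneg_left hB1 (by linarith : (0:ℤ) ≤ 2^m)]
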